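/- For any finite connected bipartite simple graph G whose bipartition has parts of sizes n₁ and n₂, we have 0 ≤ C(G) ≤ n₁n₂(n₁n₂ − n₁ − n₂ + 1)/(n₁ + n₂ − 1); the lower bound is attained with equality if and only if G is a tree, and the upper bound is attained with equality if and only if G is the complete bipartite graph K_{n₁,n₂}. -/

import Mathlib

open Matrix Finset

/-- The Moore–Penrose pseudoinverse of a real square matrix, specified (when it exists)
by the four Penrose conditions. -/
noncomputable def pinv {n : Type*} [Fintype n] [DecidableEq n] (A : Matrix n n ℝ) :
    Matrix n n ℝ :=
  open scoped Classical in
  if h : ∃ B, A * B * A = A ∧ B * A * B = B ∧ (A * B)ᵀ = A * B ∧ (B * A)ᵀ = B * A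
  then h.choose else 0

lemma penrose_unique {n : Type*} [Fintype n] [DecidableEq n] (A B C : Matrix n n ℝ)
    (hB : A * B * A = A ∧ B * A * B = B ∧ (A * B)ᵀ = A * B ∧ (B * A)ᵀ = B * A)
    (hC : A * C * A = A ∧ C * A * C = C ∧ (A * C)ᵀ = A * C ∧ (C * A)ᵀ = C * A) :
    B = C := by
  obtain ⟨hB1, hB2, hB3, hB4⟩ := hB
  obtain ⟨hC1, hC2, hC3, hC4⟩ := hC
  have hAB : A * B = A * C := by
    calc A * B = (A * B)ᵀ := hB3.symm
    _ = (A * C * A * B)ᵀ := by rw [hC1]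
    _ = ((A * C) * (A * B))ᵀ := by simp only [Matrix.mul_assoc]
    _ = (A * B)ᵀ * (A * C)ᵀ := by rw [Matrix.transpose_mul]
    _ = (A * B) * (A * C) := by rw [hB3, hC3]
    _ = (A * B * A) * C := by simp only [Matrix.mul_assoc]
    _ = A * C := by rw [hB1]
  have hBA : B * A = C * A := by
    calc B * A = (B * A)ᵀ := hB4.symm
    _ = (B * (A * C * A))ᵀ := by rw [hC1]
    _ = ((B * A) * (C * A))ᵀ := by simp only [Matrix.mul_assoc]
    _ = (C * A)ᵀ * (B * A)ᵀ := by rw [Matrix.transpose_mul]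
    _ = (C * A) * (B * A) := by rw [hB4, hC4]
    _ = C * (A * B * A) := by simp only [Matrix.mul_assoc]
    _ = C * A := by rw [hB1]
  calc B = B * A * B := hB2.symm
  _ = C * A * B := by rw [hBA]
  _ = C * (A * B) := by simp only [Matrix.mul_assoc]
  _ = C * (A * C) := by rw [hAB]
  _ = C * A * C := by simp only [Matrix.mul_assoc]
  _ = C := hC2

lemma pinv_eq {n : Type*} [Fintype n] [DecidableEq n] (A B : Matrix n n ℝ)
    (hB : A * B * A = A ∧ B * A * B = B ∧ (A * B)ᵀ = A * B ∧ (B * A)ᵀ = B * A) :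
    pinv A = B := by
  have h : ∃ C, A * C * A = A ∧ C * A * C = C ∧ (A * C)ᵀ = A * C ∧ (C * A)ᵀ = C * A := ⟨B, hB⟩
  unfold pinv
  rw [dif_pos h]
  exact penrose_unique A h.choose B h.choose_spec hB

/-- The resistance distance between two vertices of a graph:
`Ω_G(i,j) = (e_i − e_j)ᵀ L⁺ (e_i − e_j)` where `L⁺` is the Moore–Penrose pseudoinverse
of the Laplacian matrix of `G`. -/
noncomputable def resDist {V : Type*} [Fintype V] [DecidableEq V] (G : SimpleGraph V)
    (i j : V) : ℝ :=
  letI : DecidableRel G.Adj := Classical.decRel _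
  (Pi.single i 1 - Pi.single j 1) ⬝ᵥ
    (pinv (G.lapMatrix ℝ)) *ᵥ (Pi.single i 1 - Pi.single j 1)

lemma resDist_comm {V : Type*} [Fintype V] [DecidableEq V] (G : SimpleGraph V) (i j : V) :
    resDist G i j = resDist G j i := by
  unfold resDist
  rw [show (Pi.single j 1 - Pi.single i 1 : V → ℝ)
        = -(Pi.single i 1 - Pi.single j 1) by rw [neg_sub]]
  rw [Matrix.mulVec_neg, dotProduct_neg, neg_dotProduct, neg_neg]

/-- The global cyclicity index `C(G) = Σ_{ij ∈ E(G)} (1/Ω_G(i,j) − 1)`,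
the sum over all edges of `G`. -/
noncomputable def cyclicity {V : Type*} [Fintype V] [DecidableEq V] (G : SimpleGraph V) : ℝ :=
  letI : DecidableRel G.Adj := Classical.decRel _
  ∑ e ∈ G.edgeFinset,
    Sym2.lift ⟨fun i j => 1 / resDist G i j - 1,
      fun i j => by simp only []; rw [resDist_comm G i j]⟩ e


section
variable {V : Type*} [Fintype V] [DecidableEq V]

noncomputable def Lap (G : SimpleGraph V) : Matrix V V ℝ :=
  letI : DecidableRel G.Adj := Classical.decRel _
  G.lapMatrix ℝ

lemma Lap_eq (G : SimpleGraph V) [inst : DecidableRel G.Adj] : Lap G = G.lapMatrix ℝ := by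
  unfold Lap
  congr!

noncomputable def En (G : SimpleGraph V) (x : V → ℝ) : ℝ := x ⬝ᵥ (Lap G *ᵥ x)

lemma En_eq_sum (G : SimpleGraph V) [DecidableRel G.Adj] (x : V → ℝ) :
    En G x = (∑ i, ∑ j, if G.Adj i j then (x i - x j)^2 else 0) / 2 := by
  rw [En, Lap_eq, ← SimpleGraph.lapMatrix_toLinearMap₂' ℝ G x, Matrix.toLinearMap₂'_apply']

lemma En_nonneg (G : SimpleGraph V) (x : V → ℝ) : 0 ≤ En G x := by
  classical
  rw [En_eq_sum]
  positivity

lemma En_adj_eq_of_zero (G : SimpleGraph V) (hG : G.Connected) {x : V → ℝ}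
    (h : En G x = 0) : ∀ i j : V, x i = x j := by
  classical
  intro i j
  have h2 : Matrix.toLinearMap₂' ℝ (G.lapMatrix ℝ) x x = 0 := by
    rw [Matrix.toLinearMap₂'_apply', ← Lap_eq]; exact h
  exact (SimpleGraph.lapMatrix_toLinearMap₂'_apply'_eq_zero_iff_forall_reachable G x).mp h2 i j
    (hG.preconnected i j)

def Jmat (V : Type*) [Fintype V] [DecidableEq V] : Matrix V V ℝ := Matrix.of fun _ _ => 1

lemma lap_symm (G : SimpleGraph V) : (Lap G)ᵀ = Lap G := by
  classical
  rw [Lap_eq]; exact G.isSymm_lapMatrix (R := ℝ)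

lemma lap_mulVec_one (G : SimpleGraph V) : Lap G *ᵥ (fun _ => 1) = 0 := by
  classical
  rw [Lap_eq]; exact G.lapMatrix_mulVec_const_eq_zero

lemma lap_mul_J (G : SimpleGraph V) : Lap G * Jmat V = 0 := by
  ext u v
  have := congrFun (lap_mulVec_one G) u
  simpa [Matrix.mul_apply, Jmat, Matrix.mulVec, dotProduct] using this

lemma J_mul_lap (G : SimpleGraph V) : Jmat V * Lap G = 0 := by
  have := congrArg Matrix.transpose (lap_mul_J G)
  simpa [Matrix.transpose_mul, lap_symm, show (Jmat V)ᵀ = Jmat V from rfl] using this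

lemma J_mul_J : Jmat V * Jmat V = (Fintype.card V : ℝ) • Jmat V := by
  ext u v
  simp [Matrix.mul_apply, Jmat, Finset.card_univ]

lemma J_mulVec (x : V → ℝ) : Jmat V *ᵥ x = fun _ => ∑ i, x i := by
  ext u
  simp [Jmat, Matrix.mulVec, dotProduct]

/-- The key spec for the pseudoinverse of the Laplacian of a connected graph. -/
lemma pinv_lap_spec (G : SimpleGraph V) (hG : G.Connected) :
    Lap G * pinv (Lap G) = 1 - (Fintype.card V : ℝ)⁻¹ • Jmat V ∧
    pinv (Lap G) * Lap G = 1 - (Fintype.card V : ℝ)⁻¹ • Jmat V := by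
  classical
  have hne : Nonempty V := hG.nonempty
  have hn : (0:ℝ) < (Fintype.card V : ℝ) := by
    exact_mod_cast Fintype.card_pos
  set c : ℝ := (Fintype.card V : ℝ)⁻¹ with hc
  have hcn : c * (Fintype.card V : ℝ) = 1 := inv_mul_cancel₀ hn.ne'
  set L := Lap G with hL
  set M : Matrix V V ℝ := L + c • Jmat V with hM
  have hker : ∀ x, M *ᵥ x = 0 → x = 0 := by
    intro x hx
    have h0 : x ⬝ᵥ (M *ᵥ x) = 0 := by rw [hx, dotProduct_zero]
    have hJx : x ⬝ᵥ (Jmat V *ᵥ x) = (∑ i, x i)^2 := by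
      rw [J_mulVec, sq]
      simp only [dotProduct]
      rw [← Finset.sum_mul]
    have expand : x ⬝ᵥ (M *ᵥ x) = En G x + c * (∑ i, x i)^2 := by
      rw [hM, Matrix.add_mulVec, dotProduct_add, Matrix.smul_mulVec,
        dotProduct_smul, hJx]
      rfl
    have hEn0 : En G x = 0 ∧ (∑ i, x i)^2 = 0 := by
      have h1 := En_nonneg G x
      have h2 : (0:ℝ) ≤ (∑ i, x i)^2 := sq_nonneg _
      constructor <;> nlinarith [expand ▸ h0]
    have hconst := En_adj_eq_of_zero G hG hEn0.1
    have hsum : (∑ i, x i) = 0 := by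
      have := hEn0.2; nlinarith [this]
    funext u
    have : ∑ i, x i = ∑ _i : V, x u := Finset.sum_congr rfl (fun i _ => hconst i u)
    rw [hsum] at this
    simp only [Finset.sum_const, Finset.card_univ, nsmul_eq_mul] at this
    have := this.symm
    have hcard : (Fintype.card V : ℝ) ≠ 0 := hn.ne'
    field_simp at this
    simpa using this.symm
  have hdet : IsUnit M.det := by
    rw [isUnit_iff_ne_zero]
    intro hd
    obtain ⟨v, hv0, hv⟩ := (Matrix.exists_mulVec_eq_zero_iff).mpr hd
    exact hv0 (hker v hv)
  have hMi : M * M⁻¹ = 1 := Matrix.mul_nonsing_inv _ hdet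
  have hiM : M⁻¹ * M = 1 := Matrix.nonsing_inv_mul _ hdet
  have hJM : Jmat V * M = Jmat V := by
    rw [hM, Matrix.mul_add, J_mul_lap, Matrix.mul_smul, J_mul_J, smul_smul, hcn, one_smul,
      zero_add]
  have hMJ : M * Jmat V = Jmat V := by
    rw [hM, Matrix.add_mul, lap_mul_J, Matrix.smul_mul, J_mul_J, smul_smul, hcn, one_smul,
      zero_add]
  have hJMi : Jmat V * M⁻¹ = Jmat V := by
    have := congrArg (· * M⁻¹) hJM
    simpa [Matrix.mul_assoc, hMi] using this.symm
  have hMiJ : M⁻¹ * Jmat V = Jmat V := by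
    have := congrArg (M⁻¹ * ·) hMJ
    simpa [← Matrix.mul_assoc, hiM] using this.symm
  set B : Matrix V V ℝ := M⁻¹ - c • Jmat V with hB
  have hLM : L = M - c • Jmat V := by rw [hM]; abel
  have hLB : L * B = 1 - c • Jmat V := by
    rw [hB, Matrix.mul_sub, Matrix.mul_smul, lap_mul_J, smul_zero, sub_zero,
      hLM, Matrix.sub_mul, hMi, Matrix.smul_mul, hJMi]
  have hBL : B * L = 1 - c • Jmat V := by
    rw [hB, Matrix.sub_mul, Matrix.smul_mul, J_mul_lap, smul_zero, sub_zero,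
      hLM, Matrix.mul_sub, hiM, Matrix.mul_smul, hMiJ]
  have hBJ : B * Jmat V = 0 := by
    rw [hB, Matrix.sub_mul, hMiJ, Matrix.smul_mul, J_mul_J, smul_smul, hcn, one_smul, sub_self]
  have hJB : Jmat V * B = 0 := by
    rw [hB, Matrix.mul_sub, hJMi, Matrix.mul_smul, J_mul_J, smul_smul, hcn, one_smul, sub_self]
  have hpen : L * B * L = L ∧ B * L * B = B ∧ (L * B)ᵀ = L * B ∧ (B * L)ᵀ = B * L := by
    refine ⟨?_, ?_, ?_, ?_⟩
    · rw [hLB, Matrix.sub_mul, Matrix.one_mul, Matrix.smul_mul, J_mul_lap, smul_zero, sub_zero]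
    · rw [hBL, Matrix.sub_mul, Matrix.one_mul, Matrix.smul_mul, hJB, smul_zero, sub_zero]
    · rw [hLB]
      simp [Matrix.transpose_sub, Matrix.transpose_smul, show (Jmat V)ᵀ = Jmat V from rfl]
    · rw [hBL]
      simp [Matrix.transpose_sub, Matrix.transpose_smul, show (Jmat V)ᵀ = Jmat V from rfl]
  have hpB : pinv L = B := pinv_eq L B hpen
  rw [hpB]
  exact ⟨hLB, hBL⟩

end

section
variable {V : Type*} [Fintype V] [DecidableEq V]

noncomputable def del (i j : V) : V → ℝ := Pi.single i 1 - Pi.single j 1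

lemma sum_del (i j : V) : ∑ u, del i j u = 0 := by
  simp [del, Finset.sum_sub_distrib]

lemma dot_del (x : V → ℝ) (i j : V) : x ⬝ᵥ del i j = x i - x j := by
  simp [del, dotProduct, Pi.single_apply, mul_sub, sub_mul, Finset.sum_sub_distrib,
    mul_ite, ite_mul, mul_comm]

lemma del_dot (x : V → ℝ) (i j : V) : del i j ⬝ᵥ x = x i - x j := by
  simp [del, dotProduct, Pi.single_apply, mul_sub, sub_mul, Finset.sum_sub_distrib,
    mul_ite, ite_mul]

lemma resDist_def' (G : SimpleGraph V) (i j : V) :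
    resDist G i j = del i j ⬝ᵥ pinv (Lap G) *ᵥ del i j := rfl

lemma exists_sol (G : SimpleGraph V) (hG : G.Connected) (i j : V) :
    ∃ x : V → ℝ, Lap G *ᵥ x = del i j ∧ resDist G i j = x i - x j := by
  refine ⟨pinv (Lap G) *ᵥ del i j, ?_, ?_⟩
  · rw [Matrix.mulVec_mulVec, (pinv_lap_spec G hG).1, Matrix.sub_mulVec,
      Matrix.one_mulVec, Matrix.smul_mulVec, J_mulVec, sum_del]
    have h0 : ((Fintype.card V : ℝ)⁻¹ • (fun _ : V => (0:ℝ))) = 0 := by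
      funext u; simp
    rw [h0, sub_zero]
  · rw [resDist_def', ← dot_del (pinv (Lap G) *ᵥ del i j) i j]
    exact (dotProduct_comm _ _)

lemma resDist_eq_of_sol (G : SimpleGraph V) (hG : G.Connected) {i j : V} {x : V → ℝ}
    (hx : Lap G *ᵥ x = del i j) : resDist G i j = x i - x j := by
  obtain ⟨y, hy, hr⟩ := exists_sol G hG i j
  have hdiff : Lap G *ᵥ (x - y) = 0 := by
    rw [Matrix.mulVec_sub, hx, hy, sub_self]
  have hEn : En G (x - y) = 0 := by rw [En, hdiff, dotProduct_zero]
  have hconst := En_adj_eq_of_zero G hG hEn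
  have := hconst i j
  simp only [Pi.sub_apply] at this
  rw [hr]; linarith

lemma resDist_eq_En (G : SimpleGraph V) (hG : G.Connected) {i j : V} {x : V → ℝ}
    (hx : Lap G *ᵥ x = del i j) : resDist G i j = En G x := by
  rw [resDist_eq_of_sol G hG hx, En, hx, dot_del]

lemma resDist_pos (G : SimpleGraph V) (hG : G.Connected) {i j : V} (hij : i ≠ j) :
    0 < resDist G i j := by
  obtain ⟨x, hx, hr⟩ := exists_sol G hG i j
  have hEn : resDist G i j = En G x := resDist_eq_En G hG hx
  rcases lt_or_eq_of_le (En_nonneg G x) with h | h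
  · rw [hEn]; exact h
  · exfalso
    have hconst := En_adj_eq_of_zero G hG h.symm
    have hx0 : Lap G *ᵥ x = 0 := by
      have hxc : x = fun _ => x i := funext fun u => hconst u i
      rw [hxc]
      have : (fun _ : V => x i) = x i • (fun _ => (1:ℝ)) := by funext u; simp
      rw [this, Matrix.mulVec_smul, lap_mulVec_one, smul_zero]
    rw [hx] at hx0
    have h1 := congrFun hx0 i
    simp [del, Pi.single_apply, hij, (Ne.symm hij)] at h1

lemma En_ge_sq (G : SimpleGraph V) [DecidableRel G.Adj] {i j : V} (hadj : G.Adj i j)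
    (x : V → ℝ) : (x i - x j)^2 ≤ En G x := by
  rw [En_eq_sum]
  have hij : i ≠ j := hadj.ne
  have hsum : (∑ u, ∑ v, if G.Adj u v then (x u - x v)^2 else 0)
      = ∑ p ∈ Finset.univ ×ˢ Finset.univ, (if G.Adj p.1 p.2 then (x p.1 - x p.2)^2 else 0) := by
    rw [Finset.sum_product]
  have hpair : ({(i,j), (j,i)} : Finset (V × V)) ⊆ Finset.univ ×ˢ Finset.univ := by
    intro p _; simp
  have hple : ∑ p ∈ ({(i,j), (j,i)} : Finset (V × V)),
      (if G.Adj p.1 p.2 then (x p.1 - x p.2)^2 else 0)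
      ≤ ∑ p ∈ Finset.univ ×ˢ Finset.univ, (if G.Adj p.1 p.2 then (x p.1 - x p.2)^2 else 0) := by
    refine Finset.sum_le_sum_of_subset_of_nonneg hpair ?_
    intro p _ _
    positivity
  have hne : ((i,j) : V × V) ≠ (j,i) := by
    intro h; exact hij (congrArg Prod.fst h)
  rw [Finset.sum_pair hne] at hple
  simp only [if_pos hadj, if_pos hadj.symm] at hple
  have : (x j - x i)^2 = (x i - x j)^2 := by ring
  rw [this] at hple
  rw [le_div_iff₀ (by norm_num : (0:ℝ) < 2)]
  rw [hsum]
  linarith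

lemma resDist_le_one (G : SimpleGraph V) (hG : G.Connected) {i j : V} (hadj : G.Adj i j) :
    resDist G i j ≤ 1 := by
  classical
  obtain ⟨x, hx, hr⟩ := exists_sol G hG i j
  have hE : resDist G i j = En G x := resDist_eq_En G hG hx
  have hsq := En_ge_sq G hadj x
  have hpos := resDist_pos G hG hadj.ne
  nlinarith [hr ▸ hsq, hE]

end

set_option linter.unusedSectionVars false
section
variable {V : Type*} [Fintype V] [DecidableEq V]

lemma del_apply (i j u : V) :
    del i j u = (if u = i then (1:ℝ) else 0) - (if u = j then 1 else 0) := by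
  simp [del, Pi.single_apply]

lemma mulVec_lap_apply (G : SimpleGraph V) [DecidableRel G.Adj] (x : V → ℝ) (u : V) :
    (Lap G *ᵥ x) u = ∑ w ∈ G.neighborFinset u, (x u - x w) := by
  rw [Lap_eq, SimpleGraph.lapMatrix_mulVec_apply, Finset.sum_sub_distrib, Finset.sum_const,
    nsmul_eq_mul]
  rfl

lemma sdiff_fromEdgeSet_adj (G : SimpleGraph V) {i j u w : V} :
    (G \ SimpleGraph.fromEdgeSet {s(i,j)}).Adj u w ↔ G.Adj u w ∧ s(u,w) ≠ s(i,j) := by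
  simp only [SimpleGraph.sdiff_adj, SimpleGraph.fromEdgeSet_adj, Set.mem_singleton_iff]
  constructor
  · rintro ⟨h, h2⟩
    exact ⟨h, fun hc => h2 ⟨hc, h.ne⟩⟩
  · rintro ⟨h, h2⟩
    exact ⟨h, fun hc => h2 hc.1⟩

lemma resDist_eq_one_of_bridge (G : SimpleGraph V) (hG : G.Connected) {i j : V}
    (hadj : G.Adj i j) (hbr : G.IsBridge s(i,j)) : resDist G i j = 1 := by
  classical
  set H := G \ SimpleGraph.fromEdgeSet {s(i,j)} with hH
  have hnr : ¬ H.Reachable i j := SimpleGraph.isBridge_iff.mp hbr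
  set x : V → ℝ := fun u => if H.Reachable u i then 1 else 0 with hx
  have hxi : x i = 1 := if_pos (SimpleGraph.Reachable.refl i)
  have hxj : x j = 0 := if_neg (fun hr => hnr hr.symm)
  have hxeq : ∀ u w, G.Adj u w → s(u,w) ≠ s(i,j) → x u = x w := by
    intro u w h hne
    have hH' : H.Adj u w := (sdiff_fromEdgeSet_adj G).mpr ⟨h, hne⟩
    simp only [hx]
    by_cases hr : H.Reachable u i
    · rw [if_pos hr, if_pos (hH'.symm.reachable.trans hr)]
    · rw [if_neg hr, if_neg (fun hr2 => hr (hH'.reachable.trans hr2))]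
  have hsol : Lap G *ᵥ x = del i j := by
    funext u
    rw [mulVec_lap_apply, del_apply]
    by_cases hui : u = i
    · subst hui
      have : ∀ w ∈ G.neighborFinset u, x u - x w = if w = j then 1 else 0 := by
        intro w hw
        rw [SimpleGraph.mem_neighborFinset] at hw
        by_cases hwj : w = j
        · subst hwj; rw [if_pos rfl, hxi, hxj]; ring
        · rw [if_neg hwj]
          have hne : s(u,w) ≠ s(u,j) := by
            intro hc
            rcases Sym2.eq_iff.mp hc with ⟨h1, h2⟩ | ⟨h1, h2⟩
            · exact hwj h2
            · exact hadj.ne h1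
          rw [hxeq u w hw hne]; ring
      rw [Finset.sum_congr rfl this, Finset.sum_ite_eq' (G.neighborFinset u) j (fun _ => (1:ℝ)),
        if_pos ((SimpleGraph.mem_neighborFinset _ _ _).mpr hadj)]
      rw [if_pos rfl, if_neg hadj.ne]
      ring
    · by_cases huj : u = j
      · subst huj
        have : ∀ w ∈ G.neighborFinset u, x u - x w = if w = i then -1 else 0 := by
          intro w hw
          rw [SimpleGraph.mem_neighborFinset] at hw
          by_cases hwi : w = i
          · subst hwi; rw [if_pos rfl, hxi, hxj]; ring
          · rw [if_neg hwi]
            have hne : s(u,w) ≠ s(i,u) := by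
              intro hc
              rcases Sym2.eq_iff.mp hc with ⟨h1, h2⟩ | ⟨h1, h2⟩
              · exact hadj.ne h1.symm
              · exact hwi h2
            rw [hxeq u w hw hne]; ring
        rw [Finset.sum_congr rfl this, Finset.sum_ite_eq' (G.neighborFinset u) i
            (fun _ => (-1:ℝ)),
          if_pos ((SimpleGraph.mem_neighborFinset _ _ _).mpr hadj.symm)]
        rw [if_neg hui, if_pos rfl]
        ring
      · have : ∀ w ∈ G.neighborFinset u, x u - x w = 0 := by
          intro w hw
          rw [SimpleGraph.mem_neighborFinset] at hw
          have hne : s(u,w) ≠ s(i,j) := by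
            intro hc
            rcases Sym2.eq_iff.mp hc with ⟨h1, h2⟩ | ⟨h1, h2⟩
            · exact hui h1
            · exact huj h1
          rw [hxeq u w hw hne, sub_self]
        rw [Finset.sum_congr rfl this, Finset.sum_const, smul_zero, if_neg hui, if_neg huj]
        ring
  rw [resDist_eq_of_sol G hG hsol, hxi, hxj]
  ring

lemma walk_const {G : SimpleGraph V} {x : V → ℝ}
    (hx : ∀ u w, G.Adj u w → x u = x w) {u v : V} (p : G.Walk u v) : x u = x v := by
  induction p with
  | nil => rfl
  | cons h _ ih => exact (hx _ _ h).trans ih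

lemma isBridge_of_resDist_eq_one (G : SimpleGraph V) (hG : G.Connected) {i j : V}
    (hadj : G.Adj i j) (h1 : resDist G i j = 1) : G.IsBridge s(i,j) := by
  classical
  obtain ⟨x, hx, hr⟩ := exists_sol G hG i j
  have hdiff : x i - x j = 1 := by rw [← hr, h1]
  have hEn : En G x = 1 := by rw [← resDist_eq_En G hG hx, h1]
  have htot : ∑ p ∈ Finset.univ ×ˢ Finset.univ,
      (if G.Adj p.1 p.2 then (x p.1 - x p.2)^2 else 0) = 2 := by
    rw [Finset.sum_product' Finset.univ Finset.univ
      (fun u w => if G.Adj u w then (x u - x w)^2 else 0)]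
    have := En_eq_sum G x
    rw [hEn] at this
    field_simp at this
    linarith [this]
  have hT : ({(i,j), (j,i)} : Finset (V × V)) ⊆ Finset.univ ×ˢ Finset.univ := by
    intro p _; simp
  have hne : ((i,j) : V × V) ≠ (j,i) := fun h => hadj.ne (congrArg Prod.fst h)
  have hTsum : ∑ p ∈ ({(i,j), (j,i)} : Finset (V × V)),
      (if G.Adj p.1 p.2 then (x p.1 - x p.2)^2 else 0) = 2 := by
    rw [Finset.sum_pair hne]
    simp only [if_pos hadj, if_pos hadj.symm]
    rw [hdiff]
    nlinarith [hdiff]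
  have hrest : ∑ p ∈ (Finset.univ ×ˢ Finset.univ) \ ({(i,j), (j,i)} : Finset (V × V)),
      (if G.Adj p.1 p.2 then (x p.1 - x p.2)^2 else 0) = 0 := by
    have := Finset.sum_sdiff hT (f := fun p : V × V =>
      (if G.Adj p.1 p.2 then (x p.1 - x p.2)^2 else 0))
    rw [hTsum, htot] at this
    linarith
  have hzero : ∀ p ∈ (Finset.univ ×ˢ Finset.univ) \ ({(i,j), (j,i)} : Finset (V × V)),
      (if G.Adj p.1 p.2 then (x p.1 - x p.2)^2 else 0) = 0 := by
    exact (Finset.sum_eq_zero_iff_of_nonneg (fun p _ => by positivity)).mp hrest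
  have hconst : ∀ u w, (G \ SimpleGraph.fromEdgeSet {s(i,j)}).Adj u w → x u = x w := by
    intro u w h
    obtain ⟨hGuw, hneq⟩ := (sdiff_fromEdgeSet_adj G).mp h
    have hp : ((u,w) : V × V) ∈ (Finset.univ ×ˢ Finset.univ) \
        ({(i,j), (j,i)} : Finset (V × V)) := by
      simp only [Finset.mem_sdiff, Finset.mem_product, Finset.mem_univ, and_self, true_and,
        Finset.mem_insert, Finset.mem_singleton]
      push_neg
      constructor
      · intro hc; apply hneq
        rw [show u = i from congrArg Prod.fst hc, show w = j from congrArg Prod.snd hc]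
      · intro hc; apply hneq
        rw [show u = j from congrArg Prod.fst hc, show w = i from congrArg Prod.snd hc,
          Sym2.eq_swap]
    have := hzero _ hp
    rw [if_pos hGuw] at this
    have := pow_eq_zero_iff (n := 2) (by norm_num) |>.mp this
    linarith [this]
  rw [SimpleGraph.isBridge_iff]
  refine fun hreach => ?_
  obtain ⟨p⟩ := hreach
  have := walk_const hconst p
  rw [this] at hdiff
  simp at hdiff

lemma En_mono {G H : SimpleGraph V} (hGH : G ≤ H) (x : V → ℝ) : En G x ≤ En H x := by
  classical
  rw [En_eq_sum, En_eq_sum]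
  have : (∑ i, ∑ j, if G.Adj i j then (x i - x j)^2 else 0)
      ≤ (∑ i, ∑ j, if H.Adj i j then (x i - x j)^2 else 0) := by
    refine Finset.sum_le_sum fun i _ => Finset.sum_le_sum fun j _ => ?_
    by_cases h : G.Adj i j
    · rw [if_pos h, if_pos (hGH h)]
    · rw [if_neg h]
      positivity
  linarith

lemma dot_lap_comm (G : SimpleGraph V) (x d : V → ℝ) :
    d ⬝ᵥ (Lap G *ᵥ x) = x ⬝ᵥ (Lap G *ᵥ d) := by
  rw [Matrix.dotProduct_mulVec, ← lap_symm G, Matrix.vecMul_transpose, lap_symm,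
    dotProduct_comm]

lemma dirichlet (G : SimpleGraph V) (hG : G.Connected) {i j : V} {z : V → ℝ}
    (hz : z i - z j = resDist G i j) : resDist G i j ≤ En G z := by
  obtain ⟨x, hx, hr⟩ := exists_sol G hG i j
  have hxE : resDist G i j = En G x := resDist_eq_En G hG hx
  have hexp : En G z = En G x + (x ⬝ᵥ (Lap G *ᵥ (z - x))) + ((z - x) ⬝ᵥ (Lap G *ᵥ x))
      + En G (z - x) := by
    have hzx : z = x + (z - x) := by ring
    rw [En]
    nth_rewrite 1 [hzx]
    nth_rewrite 2 [hzx]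
    rw [Matrix.mulVec_add, dotProduct_add, add_dotProduct,
      add_dotProduct]
    rw [En, En]
    ring
  have hcross : (z - x) ⬝ᵥ (Lap G *ᵥ x) = 0 := by
    rw [hx, dot_del]
    simp only [Pi.sub_apply]
    linarith [hz, hr]
  have hcross2 : x ⬝ᵥ (Lap G *ᵥ (z - x)) = 0 := by
    rw [← dot_lap_comm]
    exact hcross
  have := En_nonneg G (z - x)
  rw [hexp, hcross, hcross2, ← hxE]
  linarith

lemma En_smul (G : SimpleGraph V) (t : ℝ) (x : V → ℝ) : En G (t • x) = t^2 * En G x := by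
  rw [En, En, Matrix.mulVec_smul, dotProduct_smul, smul_dotProduct]
  simp [smul_eq_mul]
  ring

lemma rayleigh {G H : SimpleGraph V} (hGH : G ≤ H) (hG : G.Connected) {i j : V}
    (hij : i ≠ j) : resDist H i j ≤ resDist G i j := by
  have hH : H.Connected := hG.mono hGH
  have hΩG : 0 < resDist G i j := resDist_pos G hG hij
  have hΩH : 0 < resDist H i j := resDist_pos H hH hij
  obtain ⟨y, hy, hry⟩ := exists_sol H hH i j
  have hyE : resDist H i j = En H y := resDist_eq_En H hH hy
  set t : ℝ := resDist G i j / resDist H i j with ht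
  have hz : (t • y) i - (t • y) j = resDist G i j := by
    simp only [Pi.smul_apply, smul_eq_mul]
    rw [← mul_sub, ← hry, ht]
    field_simp
  have h1 : resDist G i j ≤ En G (t • y) := dirichlet G hG hz
  have h2 : En G (t • y) ≤ En H (t • y) := En_mono hGH _
  have h3 : En H (t • y) = t^2 * resDist H i j := by rw [En_smul, hyE]
  have hle : resDist G i j ≤ t^2 * resDist H i j := by linarith
  rw [ht] at hle
  have key : resDist G i j * resDist H i j ≤ resDist G i j ^ 2 := by
    have h6 := mul_le_mul_of_nonneg_right hle hΩH.le
    have h7 : (resDist G i j / resDist H i j)^2 * resDist H i j * resDist H i j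
        = resDist G i j ^ 2 := by
      field_simp
    nlinarith [h6, h7]
  nlinarith [key, hΩG]

end

section
variable {V : Type*} [Fintype V] [DecidableEq V]

noncomputable def EdgeF (G : SimpleGraph V) : Finset (Sym2 V) :=
  letI : DecidableRel G.Adj := Classical.decRel _
  G.edgeFinset

noncomputable def wt (G : SimpleGraph V) : Sym2 V → ℝ :=
  Sym2.lift ⟨fun i j => 1 / resDist G i j - 1,
    fun i j => by simp only []; rw [resDist_comm G i j]⟩

lemma cyclicity_eq_sum (G : SimpleGraph V) : cyclicity G = ∑ e ∈ EdgeF G, wt G e := rfl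

lemma mem_EdgeF {G : SimpleGraph V} {e : Sym2 V} : e ∈ EdgeF G ↔ e ∈ G.edgeSet := by
  letI : DecidableRel G.Adj := Classical.decRel _
  unfold EdgeF
  exact SimpleGraph.mem_edgeFinset

lemma EdgeF_eq (G : SimpleGraph V) [Fintype G.edgeSet] : EdgeF G = G.edgeFinset := by
  ext e
  rw [mem_EdgeF, SimpleGraph.mem_edgeFinset]

lemma wt_mk (G : SimpleGraph V) (u v : V) : wt G s(u,v) = 1 / resDist G u v - 1 := rfl

lemma wt_nonneg (G : SimpleGraph V) (hG : G.Connected) {e : Sym2 V} (he : e ∈ EdgeF G) :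
    0 ≤ wt G e := by
  rw [mem_EdgeF] at he
  induction e using Sym2.inductionOn with
  | hf u v =>
    rw [SimpleGraph.mem_edgeSet] at he
    rw [wt_mk, sub_nonneg, le_div_iff₀ (resDist_pos G hG he.ne), one_mul]
    exact resDist_le_one G hG he

lemma cyclicity_nonneg (G : SimpleGraph V) (hG : G.Connected) : 0 ≤ cyclicity G := by
  rw [cyclicity_eq_sum]
  exact Finset.sum_nonneg fun e he => wt_nonneg G hG he

lemma cyclicity_eq_zero_iff (G : SimpleGraph V) (hG : G.Connected) :
    cyclicity G = 0 ↔ G.IsTree := by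
  rw [cyclicity_eq_sum]
  constructor
  · intro h0
    refine ⟨hG, ?_⟩
    rw [SimpleGraph.isAcyclic_iff_forall_adj_isBridge]
    intro u v hadj
    have he : s(u,v) ∈ EdgeF G := mem_EdgeF.mpr ((SimpleGraph.mem_edgeSet G).mpr hadj)
    have hz := (Finset.sum_eq_zero_iff_of_nonneg (fun e he => wt_nonneg G hG he)).mp h0 _ he
    rw [wt_mk] at hz
    have hpos := resDist_pos G hG hadj.ne
    have hone : resDist G u v = 1 := by
      have h1 : 1 / resDist G u v = 1 := by linarith
      field_simp at h1
      linarith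
    exact isBridge_of_resDist_eq_one G hG hadj hone
  · rintro ⟨_, hac⟩
    apply Finset.sum_eq_zero
    intro e he
    rw [mem_EdgeF] at he
    induction e using Sym2.inductionOn with
    | hf u v =>
      rw [SimpleGraph.mem_edgeSet] at he
      have hbr := (SimpleGraph.isAcyclic_iff_forall_adj_isBridge.mp hac) he
      rw [wt_mk, resDist_eq_one_of_bridge G hG he hbr]
      norm_num

end

section
variable {V : Type*} [Fintype V] [DecidableEq V] (s : Finset V)

/-- The complete bipartite graph on parts `s`, `sᶜ`. -/
noncomputable def KK (s : Finset V) : SimpleGraph V :=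
  SimpleGraph.fromRel (fun u v => u ∈ s ∧ v ∉ s)

lemma KK_adj {u v : V} : (KK s).Adj u v ↔ ((u ∈ s ∧ v ∉ s) ∨ (v ∈ s ∧ u ∉ s)) := by
  rw [KK, SimpleGraph.fromRel_adj]
  constructor
  · rintro ⟨_, h⟩; exact h
  · rintro (⟨h1, h2⟩ | ⟨h1, h2⟩)
    · exact ⟨ne_of_mem_of_not_mem h1 h2, Or.inl ⟨h1, h2⟩⟩
    · exact ⟨(ne_of_mem_of_not_mem h1 h2).symm, Or.inr ⟨h1, h2⟩⟩

lemma KK_conn (hs : s.Nonempty) (hsc : sᶜ.Nonempty) : (KK s).Connected := by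
  obtain ⟨a, ha⟩ := hs
  obtain ⟨b, hb⟩ := hsc
  rw [Finset.mem_compl] at hb
  have hadj : ∀ p q : V, p ∈ s → q ∉ s → (KK s).Adj p q := by
    intro p q hp hq
    exact (KK_adj s).mpr (Or.inl ⟨hp, hq⟩)
  rw [SimpleGraph.connected_iff]
  refine ⟨fun u v => ?_, ⟨a⟩⟩
  by_cases hu : u ∈ s <;> by_cases hv : v ∈ s
  · exact ((hadj u b hu hb).reachable).trans ((hadj v b hv hb).reachable).symm
  · exact (hadj u v hu hv).reachable
  · exact ((hadj v u hv hu).reachable).symm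
  · exact ((hadj a u ha hu).reachable).symm.trans ((hadj a v ha hv).reachable)

lemma KK_nbr_left [DecidableRel (KK s).Adj] {u : V} (hu : u ∈ s) :
    (KK s).neighborFinset u = sᶜ := by
  ext w
  rw [SimpleGraph.mem_neighborFinset, KK_adj, Finset.mem_compl]
  constructor
  · rintro (⟨_, h⟩ | ⟨_, h⟩)
    · exact h
    · exact absurd hu h
  · intro h; exact Or.inl ⟨hu, h⟩

lemma KK_nbr_right [DecidableRel (KK s).Adj] {u : V} (hu : u ∉ s) :
    (KK s).neighborFinset u = s := by
  ext w
  rw [SimpleGraph.mem_neighborFinset, KK_adj]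
  constructor
  · rintro (⟨h, _⟩ | ⟨h, _⟩)
    · exact absurd h hu
    · exact h
  · intro h; exact Or.inr ⟨h, hu⟩

noncomputable def xKK (s : Finset V) (i j : V) (a b : ℝ) (u : V) : ℝ :=
  if u = i then 1/b else if u = j then (1/b - 1)/a else if u ∈ s then 0 else 1/(a*b)

lemma resDist_KK (hs : s.Nonempty) (hsc : sᶜ.Nonempty) {i j : V} (hi : i ∈ s) (hj : j ∉ s) :
    resDist (KK s) i j = ((s.card : ℝ) + sᶜ.card - 1) / (s.card * sᶜ.card) := by
  classical
  have hK := KK_conn s hs hsc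
  set a : ℝ := (s.card : ℝ) with ha
  set b : ℝ := (sᶜ.card : ℝ) with hb
  have ha1 : 1 ≤ a := by
    rw [ha]; exact_mod_cast Finset.card_pos.mpr hs
  have hb1 : 1 ≤ b := by
    rw [hb]; exact_mod_cast Finset.card_pos.mpr hsc
  have ha0 : a ≠ 0 := by linarith
  have hb0 : b ≠ 0 := by linarith
  have hij : i ≠ j := ne_of_mem_of_not_mem hi hj
  set x : V → ℝ := xKK s i j a b with hx
  have hxi : x i = 1/b := by
    rw [hx]; unfold xKK; rw [if_pos rfl]
  have hxj : x j = (1/b - 1)/a := by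
    rw [hx]; unfold xKK; rw [if_neg hij.symm, if_pos rfl]
  have hxs : ∀ u ∈ s, u ≠ i → x u = 0 := by
    intro u hu hune
    rw [hx]; unfold xKK
    rw [if_neg hune, if_neg (ne_of_mem_of_not_mem hu hj), if_pos hu]
  have hxc : ∀ u, u ∉ s → u ≠ j → x u = 1/(a*b) := by
    intro u hu hune
    rw [hx]; unfold xKK
    rw [if_neg ((ne_of_mem_of_not_mem hi hu).symm), if_neg hune, if_neg hu]
  have hjc : j ∈ sᶜ := Finset.mem_compl.mpr hj
  have hsumc : ∑ w ∈ sᶜ, x w = (1/b - 1)/a + (b - 1) * (1/(a*b)) := by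
    rw [← Finset.sum_erase_add sᶜ x hjc, hxj]
    have hcongr : ∀ w ∈ sᶜ.erase j, x w = 1/(a*b) := by
      intro w hw
      obtain ⟨hwj, hws⟩ := Finset.mem_erase.mp hw
      exact hxc w (Finset.mem_compl.mp hws) hwj
    rw [Finset.sum_congr rfl hcongr, Finset.sum_const, Finset.card_erase_of_mem hjc,
      nsmul_eq_mul]
    have hcast : ((sᶜ.card - 1 : ℕ) : ℝ) = b - 1 := by
      have h1 : 1 ≤ sᶜ.card := Finset.card_pos.mpr hsc
      rw [Nat.cast_sub h1, hb, Nat.cast_one]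
    rw [hcast]
    ring
  have hsums : ∑ w ∈ s, x w = 1/b := by
    rw [← Finset.sum_erase_add s x hi, hxi]
    have hcongr : ∀ w ∈ s.erase i, x w = 0 := by
      intro w hw
      obtain ⟨hwi, hws⟩ := Finset.mem_erase.mp hw
      exact hxs w hws hwi
    rw [Finset.sum_congr rfl hcongr, Finset.sum_const, smul_zero, zero_add]
  have hsol : Lap (KK s) *ᵥ x = del i j := by
    funext u
    rw [mulVec_lap_apply, del_apply]
    by_cases hus : u ∈ s
    · rw [KK_nbr_left s hus, Finset.sum_sub_distrib, Finset.sum_const, nsmul_eq_mul, hsumc,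
        ← hb]
      have hnuj : u ≠ j := ne_of_mem_of_not_mem hus hj
      rw [if_neg hnuj]
      by_cases hui : u = i
      · subst hui
        rw [hxi, if_pos rfl]
        field_simp
        ring
      · rw [hxs u hus hui, if_neg hui]
        field_simp
        ring
    · rw [KK_nbr_right s hus, Finset.sum_sub_distrib, Finset.sum_const, nsmul_eq_mul, hsums,
        ← ha]
      have hnui : u ≠ i := (ne_of_mem_of_not_mem hi hus).symm
      rw [if_neg hnui]
      by_cases huj : u = j
      · subst huj
        rw [hxj, if_pos rfl]
        field_simp
        ring
      · rw [hxc u hus huj, if_neg huj]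
        field_simp
        ring
  rw [resDist_eq_of_sol (KK s) hK hsol, hxi, hxj]
  field_simp
  ring

lemma card_EdgeF_KK (hs : s.Nonempty) (hsc : sᶜ.Nonempty) :
    (EdgeF (KK s)).card = s.card * sᶜ.card := by
  classical
  have hdeg : ∑ v, (KK s).degree v = s.card * sᶜ.card + s.card * sᶜ.card := by
    rw [← Finset.sum_add_sum_compl s]
    congr 1
    · have hcongr : ∀ v ∈ s, (KK s).degree v = sᶜ.card := by
        intro v hv
        rw [← SimpleGraph.card_neighborFinset_eq_degree, KK_nbr_left s hv]
      rw [Finset.sum_congr rfl hcongr, Finset.sum_const, smul_eq_mul]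
    · have hcongr : ∀ v ∈ sᶜ, (KK s).degree v = s.card := by
        intro v hv
        rw [← SimpleGraph.card_neighborFinset_eq_degree,
          KK_nbr_right s (Finset.mem_compl.mp hv)]
      rw [Finset.sum_congr rfl hcongr, Finset.sum_const, smul_eq_mul, Nat.mul_comm]
  have h2 := SimpleGraph.sum_degrees_eq_twice_card_edges (KK s)
  rw [hdeg] at h2
  rw [EdgeF_eq]
  omega

lemma cyclicity_KK (hs : s.Nonempty) (hsc : sᶜ.Nonempty) :
    cyclicity (KK s) = (s.card : ℝ) * sᶜ.card *
      ((s.card : ℝ) * sᶜ.card - s.card - sᶜ.card + 1) / ((s.card : ℝ) + sᶜ.card - 1) := by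
  classical
  set a : ℝ := (s.card : ℝ) with ha
  set b : ℝ := (sᶜ.card : ℝ) with hb
  have ha1 : 1 ≤ a := by rw [ha]; exact_mod_cast Finset.card_pos.mpr hs
  have hb1 : 1 ≤ b := by rw [hb]; exact_mod_cast Finset.card_pos.mpr hsc
  have hab : 0 < a + b - 1 := by linarith
  have hab0 : a + b - 1 ≠ 0 := ne_of_gt hab
  have hconst : ∀ e ∈ EdgeF (KK s), wt (KK s) e = a * b / (a + b - 1) - 1 := by
    intro e he
    rw [mem_EdgeF] at he
    induction e using Sym2.inductionOn with
    | hf u v =>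
      rw [SimpleGraph.mem_edgeSet, KK_adj] at he
      have key : ∀ p q : V, p ∈ s → q ∉ s → wt (KK s) s(p, q) = a * b / (a + b - 1) - 1 := by
        intro p q hp hq
        rw [wt_mk, resDist_KK s hs hsc hp hq, ← ha, ← hb, one_div_div]
      rcases he with ⟨h1, h2⟩ | ⟨h1, h2⟩
      · exact key u v h1 h2
      · rw [Sym2.eq_swap]
        exact key v u h1 h2
  rw [cyclicity_eq_sum, Finset.sum_congr rfl hconst, Finset.sum_const,
    card_EdgeF_KK s hs hsc, nsmul_eq_mul]
  push_cast
  rw [← ha, ← hb]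
  field_simp
  ring

end

set_option linter.unusedVariables false in
theorem stmt7 {V : Type*} [Fintype V] [DecidableEq V] (G : SimpleGraph V) (hG : G.Connected)
    (s : Finset V)
    (hbip : ∀ u v : V, G.Adj u v → ((u ∈ s ∧ v ∉ s) ∨ (u ∉ s ∧ v ∈ s)))
    (n₁ n₂ : ℕ) (h₁ : n₁ = s.card) (h₂ : n₂ = sᶜ.card) :
    (0 ≤ cyclicity G ∧ cyclicity G ≤
        (n₁ : ℝ) * n₂ * ((n₁ : ℝ) * n₂ - n₁ - n₂ + 1) / ((n₁ : ℝ) + n₂ - 1)) ∧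
    (cyclicity G = 0 ↔ G.IsTree) ∧
    (cyclicity G = (n₁ : ℝ) * n₂ * ((n₁ : ℝ) * n₂ - n₁ - n₂ + 1) / ((n₁ : ℝ) + n₂ - 1) ↔
      G = SimpleGraph.fromRel (fun u v => u ∈ s ∧ v ∉ s)) := by
  classical
  subst h₁ h₂
  have hKdef : SimpleGraph.fromRel (fun u v => u ∈ s ∧ v ∉ s) = KK s := rfl
  rw [hKdef]
  by_cases hcard : Fintype.card V ≤ 1
  · -- degenerate case: one vertex
    have hsub : Subsingleton V := by
      exact Fintype.card_le_one_iff_subsingleton.mp hcard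
    have hnoedge : ∀ u v : V, ¬ G.Adj u v := fun u v h => h.ne (Subsingleton.elim u v)
    have hE : EdgeF G = ∅ := by
      refine Finset.eq_empty_of_forall_notMem fun e he => ?_
      rw [mem_EdgeF] at he
      induction e using Sym2.inductionOn with
      | hf u v =>
        rw [SimpleGraph.mem_edgeSet] at he
        exact hnoedge u v he
    have hC0 : cyclicity G = 0 := by rw [cyclicity_eq_sum, hE, Finset.sum_empty]
    have hGK : G = KK s := by
      ext u v
      constructor
      · intro h; exact absurd h (hnoedge u v)
      · intro h; exact absurd (Subsingleton.elim u v) h.ne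
    have hcv : Fintype.card V = 1 := by
      have := Fintype.card_pos_iff.mpr hG.nonempty
      omega
    have hsum : s.card + sᶜ.card = 1 := by
      rw [Finset.card_add_card_compl, hcv]
    have hRHS : (s.card : ℝ) * sᶜ.card * ((s.card : ℝ) * sᶜ.card - s.card - sᶜ.card + 1)
        / ((s.card : ℝ) + sᶜ.card - 1) = 0 := by
      rcases Nat.eq_zero_or_pos s.card with h0 | h0
      · simp [h0]
      · have h0' : sᶜ.card = 0 := by omega
        simp [h0']
    have hTree : G.IsTree := by
      refine ⟨hG, ?_⟩
      rw [SimpleGraph.isAcyclic_iff_forall_adj_isBridge]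
      intro u v h
      exact absurd h (hnoedge u v)
    exact ⟨⟨by rw [hC0], by rw [hC0, hRHS]⟩,
      ⟨fun _ => hTree, fun _ => hC0⟩,
      ⟨fun _ => hGK, fun _ => by rw [hC0, hRHS]⟩⟩
  · -- main case
    push_neg at hcard
    have hnontriv : Nontrivial V := Fintype.one_lt_card_iff_nontrivial.mp hcard
    obtain ⟨u0, v0, hne0⟩ := exists_pair_ne V
    have hedge : ∃ u v : V, G.Adj u v := by
      obtain ⟨w⟩ := hG.preconnected u0 v0
      cases w with
      | nil => exact absurd rfl hne0
      | cons h p => exact ⟨_, _, h⟩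
    obtain ⟨ue, ve, hadj0⟩ := hedge
    have hparts : s.Nonempty ∧ sᶜ.Nonempty := by
      rcases hbip ue ve hadj0 with ⟨h1, h2⟩ | ⟨h1, h2⟩
      · exact ⟨⟨ue, h1⟩, ⟨ve, Finset.mem_compl.mpr h2⟩⟩
      · exact ⟨⟨ve, h2⟩, ⟨ue, Finset.mem_compl.mpr h1⟩⟩
    obtain ⟨hsne, hscne⟩ := hparts
    have hK := KK_conn s hsne hscne
    have hGK : G ≤ KK s := by
      intro u v h
      refine (KK_adj s).mpr ?_
      rcases hbip u v h with ⟨h1, h2⟩ | ⟨h1, h2⟩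
      · exact Or.inl ⟨h1, h2⟩
      · exact Or.inr ⟨h2, h1⟩
    have hEsub : EdgeF G ⊆ EdgeF (KK s) := by
      intro e he
      rw [mem_EdgeF] at he ⊢
      exact SimpleGraph.edgeSet_mono hGK he
    have h1 : ∀ e ∈ EdgeF G, wt G e ≤ wt (KK s) e := by
      intro e
      induction e using Sym2.inductionOn with
      | hf u v =>
        intro he
        rw [mem_EdgeF, SimpleGraph.mem_edgeSet] at he
        rw [wt_mk, wt_mk]
        have hray := rayleigh hGK hG he.ne
        have hKpos := resDist_pos (KK s) hK he.ne
        have := one_div_le_one_div_of_le hKpos hray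
        linarith
    have hle : cyclicity G ≤ cyclicity (KK s) := by
      rw [cyclicity_eq_sum, cyclicity_eq_sum]
      calc ∑ e ∈ EdgeF G, wt G e ≤ ∑ e ∈ EdgeF G, wt (KK s) e := Finset.sum_le_sum h1
        _ ≤ ∑ e ∈ EdgeF (KK s), wt (KK s) e :=
          Finset.sum_le_sum_of_subset_of_nonneg hEsub
            (fun e heK _ => wt_nonneg (KK s) hK heK)
    have hpos : ∀ e, e ∈ EdgeF (KK s) → e ∉ EdgeF G → 0 < wt (KK s) e := by
      intro e
      induction e using Sym2.inductionOn with
      | hf u v =>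
        intro heK heG
        have hadjK : (KK s).Adj u v := by
          rw [mem_EdgeF, SimpleGraph.mem_edgeSet] at heK; exact heK
        have hnadj : ¬ G.Adj u v := fun h =>
          heG (mem_EdgeF.mpr ((SimpleGraph.mem_edgeSet G).mpr h))
        have hle2 : G ≤ (KK s) \ SimpleGraph.fromEdgeSet {s(u,v)} := by
          intro p q h
          refine (sdiff_fromEdgeSet_adj (KK s)).mpr ⟨hGK h, fun hc => hnadj ?_⟩
          rcases Sym2.eq_iff.mp hc with ⟨hpu, hqv⟩ | ⟨hpv, hqu⟩
          · rw [← hpu, ← hqv]; exact h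
          · rw [← hqu, ← hpv]; exact h.symm
        have hreach : ((KK s) \ SimpleGraph.fromEdgeSet {s(u,v)}).Reachable u v :=
          SimpleGraph.Reachable.mono hle2 (hG.preconnected u v)
        have hnbr : ¬ (KK s).IsBridge s(u,v) := by
          rw [SimpleGraph.isBridge_iff]
          intro hnr
          exact hnr hreach
        have hlt : resDist (KK s) u v < 1 := by
          refine lt_of_le_of_ne (resDist_le_one (KK s) hK hadjK) ?_
          intro h1'
          exact hnbr (isBridge_of_resDist_eq_one (KK s) hK hadjK h1')
        have hp := resDist_pos (KK s) hK hadjK.ne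
        rw [wt_mk, sub_pos, lt_div_iff₀ hp, one_mul]
        exact hlt
    have hstrict : G ≠ KK s → cyclicity G < cyclicity (KK s) := by
      intro hne
      have hproper : ∃ e ∈ EdgeF (KK s), e ∉ EdgeF G := by
        by_contra hcon
        push_neg at hcon
        apply hne
        apply SimpleGraph.edgeSet_inj.mp
        apply Set.Subset.antisymm
        · intro e he; exact mem_EdgeF.mp (hEsub (mem_EdgeF.mpr he))
        · intro e he; exact mem_EdgeF.mp (hcon e (mem_EdgeF.mpr he))
      obtain ⟨e0, he0K, he0G⟩ := hproper
      rw [cyclicity_eq_sum, cyclicity_eq_sum]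
      calc ∑ e ∈ EdgeF G, wt G e ≤ ∑ e ∈ EdgeF G, wt (KK s) e := Finset.sum_le_sum h1
        _ < ∑ e ∈ EdgeF (KK s), wt (KK s) e := by
          refine Finset.sum_lt_sum_of_subset hEsub he0K he0G (hpos e0 he0K he0G) ?_
          intro e heK heG
          exact wt_nonneg (KK s) hK heK
    have hRHS := cyclicity_KK s hsne hscne
    refine ⟨⟨cyclicity_nonneg G hG, le_trans hle (le_of_eq hRHS)⟩,
      cyclicity_eq_zero_iff G hG, ?_, ?_⟩
    · intro h
      by_contra hne
      have := hstrict hne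
      rw [h, ← hRHS] at this
      exact lt_irrefl _ this
    · intro h
      rw [h]
      exact hRHS
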